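/- For real numbers σ, δ, B > 0, λ ≥ 0, K ≥ 1, define H(a, b) = (b²/(a+b²))^{a+b²} e^{a} and φ = 2 ln 2 − 1. If λδ ≥ σ²K and λ ≤ B − δ/φ, then H(λ/δ, σ√K/δ) ≤ 1 − λ/B. -/

import Mathlib

open Real

/-- Freedman bound `H(a, b) = (b²/(a+b²))^{a+b²} e^a`. -/
noncomputable def freedmanH (a b : ℝ) : ℝ :=
  (b ^ 2 / (a + b ^ 2)) ^ (a + b ^ 2) * Real.exp a

/-- Key one-variable inequality: for `0 < c ≤ a`, `2 a log 2 ≤ (a+c) log ((a+c)/c)`. -/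
lemma key_log_ineq (a c : ℝ) (hc : 0 < c) (hca : c ≤ a) :
    2 * a * Real.log 2 ≤ (a + c) * Real.log ((a + c) / c) := by
  have hac : 0 < a + c := by linarith
  have h2c : 0 < 2 * c := by linarith
  have hsplit : Real.log ((a + c) / c) = Real.log ((a + c) / (2 * c)) + Real.log 2 := by
    rw [← Real.log_mul (by positivity) (by norm_num)]
    congr 1
    field_simp
  have hlb : 1 - (2 * c) / (a + c) ≤ Real.log ((a + c) / (2 * c)) := by
    have := Real.one_sub_inv_le_log_of_pos (x := (a + c) / (2 * c)) (by positivity)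
    rwa [inv_div] at this
  have hlog2 : Real.log 2 < 1 := by
    have := Real.log_two_lt_d9; linarith
  have h1 : (a + c) * (1 - (2 * c) / (a + c)) ≤ (a + c) * Real.log ((a + c) / (2 * c)) :=
    mul_le_mul_of_nonneg_left hlb hac.le
  have hexp : (a + c) * (1 - (2 * c) / (a + c)) = a - c := by
    field_simp
    ring
  rw [hsplit, mul_add]
  nlinarith [mul_le_mul_of_nonneg_left hlog2.le (sub_nonneg.mpr hca)]

/-- Bound-tightness comparison: if `λδ ≥ σ²K` and `λ ≤ B − δ/φ` with `φ = 2 ln 2 − 1`,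
then the Freedman-based bound `H(λ/δ, σ√K/δ)` is at most the Ville's-based bound
`1 − λ/B`. -/
theorem freedman_villes_comparison
    (σ δ B lam K : ℝ) (hσ : 0 < σ) (hδ : 0 < δ) (hB : 0 < B)
    (hlam : 0 ≤ lam) (hK : 1 ≤ K)
    (h1 : σ ^ 2 * K ≤ lam * δ)
    (h2 : lam ≤ B - δ / (2 * Real.log 2 - 1)) :
    freedmanH (lam / δ) (σ * Real.sqrt K / δ) ≤ 1 - lam / B := by
  have hφ : 0 < 2 * Real.log 2 - 1 := by
    have := Real.log_two_gt_d9; linarith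
  set φ : ℝ := 2 * Real.log 2 - 1 with hφdef
  have hlampos : 0 < lam := by
    have h0 : 0 < σ ^ 2 * K := by positivity
    nlinarith
  set a : ℝ := lam / δ with hadef
  set c : ℝ := σ ^ 2 * K / δ ^ 2 with hcdef
  have ha : 0 < a := by positivity
  have hc : 0 < c := by positivity
  have hca : c ≤ a := by
    rw [hcdef, hadef, div_le_div_iff₀ (by positivity) hδ]
    nlinarith
  have hac : 0 < a + c := by linarith
  have hb2 : (σ * Real.sqrt K / δ) ^ 2 = c := by
    rw [hcdef, div_pow, mul_pow, Real.sq_sqrt (by linarith : (0:ℝ) ≤ K)]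
  -- rewrite H as an exponential
  have hH : freedmanH a (σ * Real.sqrt K / δ)
      = Real.exp (a + (a + c) * Real.log (c / (a + c))) := by
    rw [freedmanH, hb2, Real.rpow_def_of_pos (by positivity), ← Real.exp_add]
    ring_nf
  rw [hH]
  -- step 1: exponent bound
  have hkey : a + (a + c) * Real.log (c / (a + c)) ≤ -(φ * a) := by
    have h := key_log_ineq a c hc hca
    rw [Real.log_div hc.ne' hac.ne']
    rw [Real.log_div hac.ne' hc.ne'] at h
    rw [hφdef]
    nlinarith
  have step1 : Real.exp (a + (a + c) * Real.log (c / (a + c))) ≤ Real.exp (-(φ * a)) :=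
    Real.exp_le_exp.mpr hkey
  -- step 2: exp(-(φ a)) ≤ 1/(1+φa)
  have h1φa : 0 < 1 + φ * a := by positivity
  have step2 : Real.exp (-(φ * a)) ≤ 1 / (1 + φ * a) := by
    rw [Real.exp_neg, inv_eq_one_div]
    exact one_div_le_one_div_of_le h1φa (by linarith [Real.add_one_le_exp (φ * a)])
  -- step 3: 1/(1+φa) ≤ 1 - lam/B
  have hBlam : δ / φ ≤ B - lam := by linarith
  have hδφ : δ ≤ φ * (B - lam) := by
    rw [div_le_iff₀ hφ] at hBlam
    linarith [hBlam]
  have step3 : 1 / (1 + φ * a) ≤ 1 - lam / B := by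
    have h : (1:ℝ) - lam / B = (B - lam) / B := by field_simp
    rw [h, div_le_div_iff₀ h1φa hB, hadef]
    have hexp : lam * δ ≤ lam * (φ * (B - lam)) :=
      mul_le_mul_of_nonneg_left hδφ hlampos.le
    rw [div_eq_mul_inv, ← mul_assoc]
    have hδinv : δ * δ⁻¹ = 1 := mul_inv_cancel₀ hδ.ne'
    have h3 : lam ≤ φ * (B - lam) * lam * δ⁻¹ := by
      have h4 := mul_le_mul_of_nonneg_right hexp (inv_pos.mpr hδ).le
      calc lam = lam * δ * δ⁻¹ := by rw [mul_assoc, hδinv, mul_one]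
        _ ≤ lam * (φ * (B - lam)) * δ⁻¹ := h4
        _ = φ * (B - lam) * lam * δ⁻¹ := by ring
    nlinarith [h3]
  calc Real.exp (a + (a + c) * Real.log (c / (a + c)))
      ≤ Real.exp (-(φ * a)) := step1
    _ ≤ 1 / (1 + φ * a) := step2
    _ ≤ 1 - lam / B := step3
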